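/- Assume the restricted isometry and orthogonality hypotheses δ = δ_{2S}(X̃), θ = θ_{S,2S}(X̃), δ + θ < 1, where X̃ = X/√n, and let β⁰ be supported on γ⁰ with |γ⁰| ≤ S. Suppose the noise vector e lies in the event E = {e : ‖X̃_γᵀe‖₂² ≤ 4σ²(1+α)|γ| log p for all γ}. Then for all γ, γ′ ∈ {0,1}^p with γ⁰ ≤ γ and |γ′| ≤ 2S: |(Xβ⁰)ᵀ(P_{γ′} - P_γ)e| ≤ 2σ·((1-δ+θ)/(1-δ))·√((1+α)·max{|γ⁰∖γ′|, |γ′|}·n·log p)·‖β⁰_{γ⁰∖γ′}‖₂. -/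

import Mathlib

set_option maxHeartbeats 1000000
open Matrix

lemma my_restrict_mulVec {n p : ℕ} (X : Matrix (Fin n) (Fin p) ℝ) (t : Finset (Fin p))
    (b : Fin p → ℝ) (hb : ∀ i ∉ t, b i = 0) :
    X.mulVec b = (X.submatrix id (Subtype.val : t → Fin p)).mulVec (fun i => b i.val) := by
  funext j
  simp only [Matrix.mulVec, dotProduct, Matrix.submatrix_apply, id]
  rw [Finset.sum_coe_sort t (fun i => X j i * b i)]
  refine (Finset.sum_subset (Finset.subset_univ t) ?_).symm
  intro i _ hi
  rw [hb i hi, mul_zero]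

lemma my_proj_symm {n : ℕ} {m : Type*} [Fintype m] [DecidableEq m]
    (Xg : Matrix (Fin n) m ℝ) :
    (Xg * (Xgᵀ * Xg)⁻¹ * Xgᵀ)ᵀ = Xg * (Xgᵀ * Xg)⁻¹ * Xgᵀ := by
  rw [Matrix.transpose_mul, Matrix.transpose_mul, Matrix.transpose_transpose,
    Matrix.transpose_nonsing_inv, Matrix.transpose_mul, Matrix.transpose_transpose,
    Matrix.mul_assoc]

lemma my_proj_fix {n p : ℕ} (X : Matrix (Fin n) (Fin p) ℝ) (t : Finset (Fin p))
    (Xg : Matrix (Fin n) t ℝ) (hXg : Xg = X.submatrix id (Subtype.val : t → Fin p))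
    (hinv : IsUnit (Xgᵀ * Xg).det)
    (b : Fin p → ℝ) (hb : ∀ i ∉ t, b i = 0) :
    (Xg * (Xgᵀ * Xg)⁻¹ * Xgᵀ).mulVec (X.mulVec b) = X.mulVec b := by
  have key : Xg * (Xgᵀ * Xg)⁻¹ * Xgᵀ * Xg = Xg := calc
    Xg * (Xgᵀ * Xg)⁻¹ * Xgᵀ * Xg = Xg * ((Xgᵀ * Xg)⁻¹ * (Xgᵀ * Xg)) := by
        rw [Matrix.mul_assoc, Matrix.mul_assoc]
    _ = Xg := by rw [Matrix.nonsing_inv_mul _ hinv, Matrix.mul_one]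
  rw [my_restrict_mulVec X t b hb, ← hXg, Matrix.mulVec_mulVec, key]

theorem projection_noise_term_bound (n p S : ℕ) (hn : 0 < n) (hp : 1 < p)
    (σ α δ θ : ℝ) (hσ : 0 < σ) (hα : 0 < α)
    (hδ0 : 0 ≤ δ) (hθ0 : 0 ≤ θ) (hsum : δ + θ < 1)
    (X : Matrix (Fin n) (Fin p) ℝ)
    (Xt : Matrix (Fin n) (Fin p) ℝ) (hXt : Xt = (1 / Real.sqrt n) • X)
    (hRIP : ∀ b : Fin p → ℝ, (Finset.univ.filter fun i => b i ≠ 0).card ≤ 2 * S →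
      (1 - δ) * ∑ i, (b i) ^ 2 ≤ ∑ j, (Xt.mulVec b j) ^ 2 ∧
      ∑ j, (Xt.mulVec b j) ^ 2 ≤ (1 + δ) * ∑ i, (b i) ^ 2)
    (hRO : ∀ (b b' : Fin p → ℝ) (T T' : Finset (Fin p)), Disjoint T T' →
      T.card ≤ S → T'.card ≤ 2 * S →
      (∀ i ∉ T, b i = 0) → (∀ i ∉ T', b' i = 0) →
      |∑ j, Xt.mulVec b j * Xt.mulVec b' j| ≤
        θ * Real.sqrt (∑ i, (b i) ^ 2) * Real.sqrt (∑ i, (b' i) ^ 2))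
    (β0 : Fin p → ℝ) (γ0 : Finset (Fin p)) (hγ0 : γ0.card ≤ S)
    (hsupp : ∀ i ∉ γ0, β0 i = 0)
    -- the noise vector lies in the event E
    (e : Fin n → ℝ)
    (hE : ∀ γ : Finset (Fin p),
      ∑ i ∈ γ, (∑ j, Xt j i * e j) ^ 2 ≤ 4 * σ ^ 2 * (1 + α) * γ.card * Real.log p)
    (γ γ' : Finset (Fin p)) (hγγ0 : γ0 ⊆ γ) (hγ' : γ'.card ≤ 2 * S)
    (Xγ : Matrix (Fin n) γ ℝ) (hXγ : Xγ = X.submatrix id (Subtype.val : γ → Fin p))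
    (Xγ' : Matrix (Fin n) γ' ℝ) (hXγ' : Xγ' = X.submatrix id (Subtype.val : γ' → Fin p))
    (hinvγ : IsUnit (Xγᵀ * Xγ).det) (hinvγ' : IsUnit (Xγ'ᵀ * Xγ').det)
    (Pγ Pγ' : Matrix (Fin n) (Fin n) ℝ)
    (hPγ : Pγ = Xγ * (Xγᵀ * Xγ)⁻¹ * Xγᵀ)
    (hPγ' : Pγ' = Xγ' * (Xγ'ᵀ * Xγ')⁻¹ * Xγ'ᵀ) :
    |(X.mulVec β0) ⬝ᵥ ((Pγ' - Pγ).mulVec e)| ≤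
      2 * σ * ((1 - δ + θ) / (1 - δ)) *
        Real.sqrt ((1 + α) * max ((γ0 \ γ').card : ℝ) (γ'.card : ℝ) * n * Real.log p) *
        Real.sqrt (∑ i ∈ γ0 \ γ', (β0 i) ^ 2) := by
  have hn' : (0:ℝ) < n := by exact_mod_cast hn
  have hlogp : (0:ℝ) < Real.log p := Real.log_pos (by exact_mod_cast hp)
  have h1δ : (0:ℝ) < 1 - δ := by linarith
  have hsqn : (0:ℝ) < Real.sqrt n := Real.sqrt_pos.mpr hn'
  set s : Finset (Fin p) := γ0 \ γ' with hs
  set v : Fin p → ℝ := fun i => if i ∈ s then β0 i else 0 with hv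
  set u : Fin p → ℝ := fun i => if i ∈ s then 0 else β0 i with hu
  have hvsupp : ∀ i ∉ s, v i = 0 := fun i hi => by simp [hv, hi]
  have husupp : ∀ i ∉ γ', u i = 0 := by
    intro i hi
    by_cases h : i ∈ s
    · simp [hu, h]
    · have : i ∉ γ0 := fun hm => h (Finset.mem_sdiff.mpr ⟨hm, hi⟩)
      simp [hu, h, hsupp i this]
  have hβ0supp : ∀ i ∉ γ, β0 i = 0 := fun i hi => hsupp i (fun h => hi (hγγ0 h))
  have huv : β0 = u + v := by
    funext i; by_cases h : i ∈ s <;> simp [hu, hv, h]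
  set Vsq : ℝ := ∑ i ∈ s, (β0 i) ^ 2 with hVsqdef
  have hVsq0 : 0 ≤ Vsq := Finset.sum_nonneg fun i _ => sq_nonneg _
  have hVsq : ∑ i, v i ^ 2 = Vsq := by
    rw [hVsqdef, ← Finset.sum_subset (Finset.subset_univ s)
      (fun i _ hi => by simp [hv, hi])]
    exact Finset.sum_congr rfl fun i hi => by simp [hv, hi]
  -- columns correlations with noise
  set c : Fin p → ℝ := fun i => ∑ j, Xt j i * e j with hc
  have hE' : ∀ t : Finset (Fin p),
      ∑ i ∈ t, c i ^ 2 ≤ 4 * σ ^ 2 * (1 + α) * t.card * Real.log p := by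
    intro t; simpa [hc] using hE t
  have hXcol : ∀ j i, X j i = Real.sqrt n * Xt j i := by
    intro j i
    rw [hXt]
    simp only [Matrix.smul_apply, smul_eq_mul]
    field_simp
  have hXe : ∀ i, Xᵀ.mulVec e i = Real.sqrt n * c i := by
    intro i
    simp only [Matrix.mulVec, dotProduct, Matrix.transpose_apply, hc]
    rw [Finset.mul_sum]
    exact Finset.sum_congr rfl fun j _ => by rw [hXcol j i]; ring
  -- symmetry of projections
  have hPγsymm : Pγᵀ = Pγ := by rw [hPγ]; exact my_proj_symm _
  have hPγ'symm : Pγ'ᵀ = Pγ' := by rw [hPγ']; exact my_proj_symm _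
  have hdot : ∀ (P : Matrix (Fin n) (Fin n) ℝ), Pᵀ = P → ∀ b : Fin p → ℝ,
      (X.mulVec b) ⬝ᵥ P.mulVec e = (P.mulVec (X.mulVec b)) ⬝ᵥ e := by
    intro P hP b
    rw [Matrix.dotProduct_mulVec, ← Matrix.mulVec_transpose, hP]
  have hfixγ : Pγ.mulVec (X.mulVec β0) = X.mulVec β0 := by
    rw [hPγ]; exact my_proj_fix X γ Xγ hXγ hinvγ β0 hβ0supp
  have hfixu : Pγ'.mulVec (X.mulVec u) = X.mulVec u := by
    rw [hPγ']; exact my_proj_fix X γ' Xγ' hXγ' hinvγ' u husupp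
  -- main algebraic identity
  have hmain : (X.mulVec β0) ⬝ᵥ ((Pγ' - Pγ).mulVec e) =
      (X.mulVec v) ⬝ᵥ (Pγ'.mulVec e) - (X.mulVec v) ⬝ᵥ e := by
    have hXβ0 : X.mulVec β0 = X.mulVec u + X.mulVec v := by
      rw [huv, Matrix.mulVec_add]
    rw [Matrix.sub_mulVec, dotProduct_sub,
      hdot Pγ hPγsymm β0, hfixγ, hdot Pγ' hPγ'symm β0, hXβ0,
      Matrix.mulVec_add, hfixu, add_dotProduct, add_dotProduct,
      ← hdot Pγ' hPγ'symm v]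
    ring
  rw [hmain]
  -- T1 bound
  set K1 : ℝ := 4*σ^2*(1+α)*(s.card:ℝ)*(n:ℝ)*Real.log p with hK1def
  have hK1nn : 0 ≤ K1 := by rw [hK1def]; exact mul_nonneg (mul_nonneg (mul_nonneg (mul_nonneg (by positivity) (by linarith)) (Nat.cast_nonneg _)) hn'.le) hlogp.le
  have hT1 : |(X.mulVec v) ⬝ᵥ e| ≤ Real.sqrt K1 * Real.sqrt Vsq := by
    have h1 : (X.mulVec v) ⬝ᵥ e = ∑ i ∈ s, (Real.sqrt n * c i) * β0 i := by
      rw [dotProduct_comm, Matrix.dotProduct_mulVec, ← Matrix.mulVec_transpose]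
      simp only [dotProduct]
      rw [← Finset.sum_subset (Finset.subset_univ s) (fun i _ hi => by simp [hv, hi])]
      refine Finset.sum_congr rfl fun i hi => ?_
      rw [hXe i]; simp [hv, hi]
    have hcs := Finset.sum_mul_sq_le_sq_mul_sq s (fun i => Real.sqrt n * c i) β0
    have hsum1 : ∑ i ∈ s, (Real.sqrt n * c i)^2 = (n:ℝ) * ∑ i ∈ s, c i ^ 2 := by
      rw [Finset.mul_sum]
      exact Finset.sum_congr rfl fun i _ => by rw [mul_pow, Real.sq_sqrt hn'.le]
    have hb1 : ((X.mulVec v) ⬝ᵥ e)^2 ≤ K1 * Vsq := by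
      rw [h1, hVsqdef]
      refine hcs.trans ?_
      apply mul_le_mul_of_nonneg_right _ (Finset.sum_nonneg fun i _ => sq_nonneg _)
      rw [hsum1, hK1def]
      calc (n:ℝ) * ∑ i ∈ s, c i ^2 ≤ (n:ℝ) * (4*σ^2*(1+α)*s.card*Real.log p) :=
            mul_le_mul_of_nonneg_left (hE' s) hn'.le
        _ = _ := by ring
    calc |(X.mulVec v) ⬝ᵥ e| = Real.sqrt (((X.mulVec v) ⬝ᵥ e)^2) := (Real.sqrt_sq_eq_abs _).symm
      _ ≤ Real.sqrt (K1 * Vsq) := Real.sqrt_le_sqrt hb1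
      _ = Real.sqrt K1 * Real.sqrt Vsq := Real.sqrt_mul hK1nn _
  -- T2 bound
  set K2 : ℝ := 4*σ^2*(1+α)*(γ'.card:ℝ)*(n:ℝ)*Real.log p with hK2def
  have hK2nn : 0 ≤ K2 := by rw [hK2def]; exact mul_nonneg (mul_nonneg (mul_nonneg (mul_nonneg (by positivity) (by linarith)) (Nat.cast_nonneg _)) hn'.le) hlogp.le
  set w : γ' → ℝ := ((Xγ'ᵀ * Xγ')⁻¹ * Xγ'ᵀ).mulVec e with hw
  set w' : Fin p → ℝ := fun i => if h : i ∈ γ' then w ⟨i, h⟩ else 0 with hw'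
  have hw'supp : ∀ i ∉ γ', w' i = 0 := fun i hi => by simp [hw', hi]
  have hq : Pγ'.mulVec e = Xγ'.mulVec w := by
    rw [hPγ', Matrix.mul_assoc, hw, Matrix.mulVec_mulVec]
  have hXw' : X.mulVec w' = Xγ'.mulVec w := by
    rw [my_restrict_mulVec X γ' w' hw'supp, ← hXγ']
    congr 1
    funext i
    simp [hw']
  set Wsq : ℝ := ∑ i : γ', (w i)^2 with hWsqdef
  have hWsq0 : 0 ≤ Wsq := Finset.sum_nonneg fun i _ => sq_nonneg _
  have hWsq : ∑ i, w' i ^ 2 = Wsq := by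
    rw [← Finset.sum_subset (Finset.subset_univ γ') (fun i _ hi => by simp [hw'supp i hi]),
      hWsqdef, ← Finset.sum_coe_sort γ' (fun i => w' i ^ 2)]
    exact Finset.sum_congr rfl fun i _ => by simp [hw', i.2]
  have hXtmv : ∀ (b : Fin p → ℝ) (j : Fin n), Xt.mulVec b j = (1/Real.sqrt n) * (X.mulVec b j) := by
    intro b j
    rw [hXt, Matrix.smul_mulVec]
    simp
  have hmulself : (1/Real.sqrt n) * (1/Real.sqrt n) = 1/(n:ℝ) := by
    rw [div_mul_div_comm, one_mul, Real.mul_self_sqrt hn'.le]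
  have hsS : s.card ≤ S := le_trans (Finset.card_le_card Finset.sdiff_subset) hγ0
  have hro := hRO v w' s γ' Finset.sdiff_disjoint hsS hγ' hvsupp hw'supp
  rw [hVsq, hWsq] at hro
  have hprod : ∑ j, Xt.mulVec v j * Xt.mulVec w' j
      = (1/(n:ℝ)) * ((X.mulVec v) ⬝ᵥ (Pγ'.mulVec e)) := by
    rw [hq, ← hXw']
    simp only [dotProduct]
    rw [Finset.mul_sum]
    refine Finset.sum_congr rfl fun j _ => ?_
    rw [hXtmv v j, hXtmv w' j, ← hmulself]
    ring
  have hT2a : |(X.mulVec v) ⬝ᵥ (Pγ'.mulVec e)| ≤ (n:ℝ) * (θ * Real.sqrt Vsq * Real.sqrt Wsq) := by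
    have heq : (X.mulVec v) ⬝ᵥ (Pγ'.mulVec e) = (n:ℝ) * ∑ j, Xt.mulVec v j * Xt.mulVec w' j := by
      rw [hprod, ← mul_assoc, mul_one_div, div_self hn'.ne', one_mul]
    rw [heq, abs_mul, abs_of_nonneg hn'.le]
    exact mul_le_mul_of_nonneg_left hro hn'.le
  have hcardw : (Finset.univ.filter fun i => w' i ≠ 0).card ≤ 2 * S := by
    refine le_trans (Finset.card_le_card ?_) hγ'
    intro i hi
    rw [Finset.mem_filter] at hi
    by_contra h
    exact hi.2 (hw'supp i h)
  have hRIPw := (hRIP w' hcardw).1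
  rw [hWsq] at hRIPw
  have hXtw : ∑ j, (Xt.mulVec w' j)^2 = (1/(n:ℝ)) * ((Xγ'ᵀ.mulVec e) ⬝ᵥ w) := by
    have h2 : ∑ j, (Xt.mulVec w' j)^2 = (1/(n:ℝ)) * ((X.mulVec w') ⬝ᵥ (X.mulVec w')) := by
      simp only [dotProduct]
      rw [Finset.mul_sum]
      refine Finset.sum_congr rfl fun j _ => ?_
      rw [hXtmv w' j, ← hmulself]; ring
    rw [h2]
    congr 1
    rw [hXw', Matrix.dotProduct_mulVec, ← Matrix.mulVec_transpose, Matrix.mulVec_mulVec]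
    have hkey2 : (Xγ'ᵀ * Xγ') *ᵥ w = Xγ'ᵀ *ᵥ e := by
      rw [hw, Matrix.mulVec_mulVec, ← Matrix.mul_assoc,
        Matrix.mul_nonsing_inv _ hinvγ', Matrix.one_mul]
    rw [hkey2]
  have hD : (Xγ'ᵀ.mulVec e) ⬝ᵥ w ≤ Real.sqrt K2 * Real.sqrt Wsq := by
    have h1 : (Xγ'ᵀ.mulVec e) ⬝ᵥ w = ∑ i : γ', (Real.sqrt n * c i.val) * w i := by
      simp only [dotProduct]
      refine Finset.sum_congr rfl fun i _ => ?_
      congr 1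
      rw [hXγ']
      simp only [Matrix.mulVec, dotProduct, Matrix.transpose_apply,
        Matrix.submatrix_apply, id, hc]
      rw [Finset.mul_sum]
      exact Finset.sum_congr rfl fun j _ => by rw [hXcol j i.val]; ring
    have hcs := Finset.sum_mul_sq_le_sq_mul_sq Finset.univ
      (fun i : γ' => Real.sqrt n * c i.val) w
    have hsum1 : ∑ i : γ', (Real.sqrt n * c i.val)^2 ≤ K2 := by
      have heq2 : ∑ i : γ', (Real.sqrt n * c i.val)^2 = (n:ℝ) * ∑ i ∈ γ', c i ^2 := by
        rw [← Finset.sum_coe_sort γ' (fun i => c i ^2), Finset.mul_sum]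
        exact Finset.sum_congr rfl fun i _ => by rw [mul_pow, Real.sq_sqrt hn'.le]
      rw [heq2, hK2def]
      calc (n:ℝ) * ∑ i ∈ γ', c i ^2 ≤ (n:ℝ) * (4*σ^2*(1+α)*γ'.card*Real.log p) :=
            mul_le_mul_of_nonneg_left (hE' γ') hn'.le
        _ = _ := by ring
    have hsq : ((Xγ'ᵀ.mulVec e) ⬝ᵥ w)^2 ≤ K2 * Wsq := by
      rw [h1]
      refine hcs.trans ?_
      exact mul_le_mul hsum1 le_rfl (Finset.sum_nonneg fun i _ => sq_nonneg _) hK2nn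
    calc (Xγ'ᵀ.mulVec e) ⬝ᵥ w ≤ |(Xγ'ᵀ.mulVec e) ⬝ᵥ w| := le_abs_self _
      _ = Real.sqrt (((Xγ'ᵀ.mulVec e) ⬝ᵥ w)^2) := (Real.sqrt_sq_eq_abs _).symm
      _ ≤ Real.sqrt (K2 * Wsq) := Real.sqrt_le_sqrt hsq
      _ = _ := Real.sqrt_mul hK2nn _
  have hWbound : (n:ℝ) * (1-δ) * Real.sqrt Wsq ≤ Real.sqrt K2 := by
    have hkey : (n:ℝ) * ((1-δ) * Wsq) ≤ Real.sqrt K2 * Real.sqrt Wsq := by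
      have h7 := mul_le_mul_of_nonneg_left hRIPw hn'.le
      rw [hXtw] at h7
      calc (n:ℝ) * ((1-δ)*Wsq) ≤ (n:ℝ) * ((1/(n:ℝ)) * ((Xγ'ᵀ.mulVec e) ⬝ᵥ w)) := h7
        _ = (Xγ'ᵀ.mulVec e) ⬝ᵥ w := by
            rw [← mul_assoc, mul_one_div, div_self hn'.ne', one_mul]
        _ ≤ _ := hD
    rcases eq_or_lt_of_le (Real.sqrt_nonneg Wsq) with h0 | h0
    · rw [← h0, mul_zero]; exact Real.sqrt_nonneg _
    · refine le_of_mul_le_mul_right ?_ h0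
      have hms : Real.sqrt Wsq * Real.sqrt Wsq = Wsq := Real.mul_self_sqrt hWsq0
      have heq3 : (n:ℝ)*(1-δ)*Real.sqrt Wsq*Real.sqrt Wsq = (n:ℝ)*((1-δ)*Wsq) := by
        rw [mul_assoc ((n:ℝ)*(1-δ)), hms]; ring
      rw [heq3]; exact hkey
  have hT2 : |(X.mulVec v) ⬝ᵥ (Pγ'.mulVec e)| ≤ θ/(1-δ) * Real.sqrt K2 * Real.sqrt Vsq := by
    refine hT2a.trans ?_
    have h3 : (n:ℝ) * Real.sqrt Wsq ≤ Real.sqrt K2 / (1-δ) := by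
      rw [le_div_iff₀ h1δ]; nlinarith [hWbound]
    have h4 := mul_le_mul_of_nonneg_left h3
      (mul_nonneg hθ0 (Real.sqrt_nonneg Vsq))
    calc (n:ℝ)*(θ*Real.sqrt Vsq*Real.sqrt Wsq)
        = (θ*Real.sqrt Vsq) * ((n:ℝ)*Real.sqrt Wsq) := by ring
      _ ≤ (θ*Real.sqrt Vsq) * (Real.sqrt K2/(1-δ)) := h4
      _ = θ/(1-δ)*Real.sqrt K2*Real.sqrt Vsq := by ring
  -- final assembly
  set M : ℝ := max ((s.card:ℝ)) ((γ'.card:ℝ)) with hM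
  have hMnn : (0:ℝ) ≤ M := le_trans (Nat.cast_nonneg _) (le_max_left _ _)
  set K : ℝ := 4*σ^2*(1+α)*M*(n:ℝ)*Real.log p with hK
  have hKnn : 0 ≤ K := by rw [hK]; exact mul_nonneg (mul_nonneg (mul_nonneg (mul_nonneg (by positivity) (by linarith)) hMnn) hn'.le) hlogp.le
  have hA : (0:ℝ) < 4*σ^2*(1+α)*(n:ℝ)*Real.log p := by
    have h4σ : (0:ℝ) < 4*σ^2 := by positivity
    have h1α : (0:ℝ) < 1 + α := by linarith
    exact mul_pos (mul_pos (mul_pos h4σ h1α) hn') hlogp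
  have hK1K : Real.sqrt K1 ≤ Real.sqrt K := by
    apply Real.sqrt_le_sqrt
    rw [hK1def, hK]
    have hle : (s.card:ℝ) ≤ M := le_max_left _ _
    calc 4*σ^2*(1+α)*(s.card:ℝ)*(n:ℝ)*Real.log p
        = (s.card:ℝ) * (4*σ^2*(1+α)*(n:ℝ)*Real.log p) := by ring
      _ ≤ M * (4*σ^2*(1+α)*(n:ℝ)*Real.log p) := mul_le_mul_of_nonneg_right hle hA.le
      _ = 4*σ^2*(1+α)*M*(n:ℝ)*Real.log p := by ring
  have hK2K : Real.sqrt K2 ≤ Real.sqrt K := by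
    apply Real.sqrt_le_sqrt
    rw [hK2def, hK]
    have hle : (γ'.card:ℝ) ≤ M := le_max_right _ _
    calc 4*σ^2*(1+α)*(γ'.card:ℝ)*(n:ℝ)*Real.log p
        = (γ'.card:ℝ) * (4*σ^2*(1+α)*(n:ℝ)*Real.log p) := by ring
      _ ≤ M * (4*σ^2*(1+α)*(n:ℝ)*Real.log p) := mul_le_mul_of_nonneg_right hle hA.le
      _ = 4*σ^2*(1+α)*M*(n:ℝ)*Real.log p := by ring
  have hKeq : Real.sqrt K = 2*σ*Real.sqrt ((1+α)*M*(n:ℝ)*Real.log p) := by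
    have h4 : K = (2*σ)^2 * ((1+α)*M*(n:ℝ)*Real.log p) := by rw [hK]; ring
    rw [h4, Real.sqrt_mul (sq_nonneg _), Real.sqrt_sq (by positivity)]
  have hfrac : (1 - δ + θ)/(1-δ) = 1 + θ/(1-δ) := by field_simp
  have hθδ : 0 ≤ θ/(1-δ) := div_nonneg hθ0 h1δ.le
  have hsV : 0 ≤ Real.sqrt Vsq := Real.sqrt_nonneg _
  calc |(X.mulVec v) ⬝ᵥ (Pγ'.mulVec e) - (X.mulVec v) ⬝ᵥ e|
      ≤ |(X.mulVec v) ⬝ᵥ (Pγ'.mulVec e)| + |(X.mulVec v) ⬝ᵥ e| := abs_sub _ _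
    _ ≤ θ/(1-δ) * Real.sqrt K2 * Real.sqrt Vsq + Real.sqrt K1 * Real.sqrt Vsq :=
        add_le_add hT2 hT1
    _ ≤ θ/(1-δ) * Real.sqrt K * Real.sqrt Vsq + Real.sqrt K * Real.sqrt Vsq := by
        refine add_le_add ?_ (mul_le_mul_of_nonneg_right hK1K hsV)
        exact mul_le_mul_of_nonneg_right
          (mul_le_mul_of_nonneg_left hK2K hθδ) hsV
    _ = (1 + θ/(1-δ)) * (Real.sqrt K * Real.sqrt Vsq) := by ring
    _ = 2 * σ * ((1 - δ + θ) / (1 - δ)) *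
        Real.sqrt ((1 + α) * M * (n:ℝ) * Real.log p) * Real.sqrt Vsq := by
        rw [hKeq, hfrac]; ring
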